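/- Let a, b, c, m, n, p, q, α, β be real numbers with a ≠ 0 and α ≠ β. Suppose q = m·p + n, and suppose α and β are abscissas of intersection points of the parabola y = a x² + b x + c with the line y = m x + n, i.e. a·α² + b·α + c = m·α + n and a·β² + b·β + c = m·β + n. Then a·(α − p)·(β − p) = a·p² + b·p + c − q. In particular, the product (α − p)(β − p) depends only on the point (p,q) and the parabola, not on the choice of the line through (p,q). -/
import Mathlib


/-- Parabolic Power Theorem: for a line `y = m x + n` through `(p, q)` meeting the
parabola `y = a x² + b x + c` at abscissas `α, β`, one has
`a (α − p)(β − p) = a p² + b p + c − q`, independent of the line. -/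
theorem parabolic_power_theorem (a b c m n p q α β : ℝ)
    (ha : a ≠ 0) (hαβ : α ≠ β)
    (hq : q = m * p + n)
    (hα : a * α ^ 2 + b * α + c = m * α + n)
    (hβ : a * β ^ 2 + b * β + c = m * β + n) :
    a * (α - p) * (β - p) = a * p ^ 2 + b * p + c - q := by
  have hne : α - β ≠ 0 := sub_ne_zero.mpr hαβ
  have hm : a * (α + β) + b = m := by
    have h : (a * (α + β) + b) * (α - β) = m * (α - β) := by ring_nf; nlinarith [hα, hβ]
    exact mul_right_cancel₀ hne h
  have hn : n = a * α ^ 2 + b * α + c - m * α := by linarith [hα]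
  subst hq hn
  rw [← hm]; ring
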